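/- Let A, B be random Hermitian n×n matrices, D a fixed (or random) n×n matrix, and f : ℝ → ℝ differentiable with divided difference f^{[1]} bounded by Ω on the spectra of A and B. Then for any unitarily invariant norm ‖·‖ and any θ > 0, Pr(‖D f(A) − f(B) D‖ ≥ θ) ≤ (n² Ω / θ) · E‖D A − B D‖. -/

import Mathlib

open Matrix BigOperators MeasureTheory ProbabilityTheory

lemma vmv_mul_vmv {n : ℕ} (a b c d : Fin n → ℂ) :
    vecMulVec a b * vecMulVec c d = (b ⬝ᵥ c) • vecMulVec a d := by
  ext k l
  simp only [mul_apply, vecMulVec_apply, Matrix.smul_apply, dotProduct, smul_eq_mul,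
    Finset.sum_mul]
  exact Finset.sum_congr rfl fun m _ => by ring

lemma N_sum_le {n : ℕ} (N : Matrix (Fin n) (Fin n) ℂ → ℝ)
    (hN0 : N 0 = 0) (hadd : ∀ Y Z, N (Y + Z) ≤ N Y + N Z)
    {ι : Type*} (s : Finset ι) (g : ι → Matrix (Fin n) (Fin n) ℂ) :
    N (∑ x ∈ s, g x) ≤ ∑ x ∈ s, N (g x) := by
  classical
  induction s using Finset.induction with
  | empty => simp [hN0]
  | @insert a s hx ih =>
    rw [Finset.sum_insert hx, Finset.sum_insert hx]
    exact (hadd _ _).trans (by linarith)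

lemma pointwise_qc_bound {n : ℕ}
    (u v : Fin n → Fin n → ℂ) (lam mu : Fin n → ℝ)
    (hu : ∀ i j, star (u i) ⬝ᵥ u j = if i = j then 1 else 0)
    (hv : ∀ i j, star (v i) ⬝ᵥ v j = if i = j then 1 else 0)
    (A B D : Matrix (Fin n) (Fin n) ℂ)
    (hAdec : A = ∑ i, (lam i : ℂ) • vecMulVec (u i) (star (u i)))
    (hBdec : B = ∑ j, (mu j : ℂ) • vecMulVec (v j) (star (v j)))
    (f : ℝ → ℝ) (f1 : ℝ → ℝ → ℝ)
    (hf1 : ∀ x y, f1 x y = if x = y then deriv f x else (f x - f y) / (x - y))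
    (Ω₀ : ℝ) (hbound : ∀ i j, |f1 (lam i) (mu j)| ≤ Ω₀)
    (fA fB : Matrix (Fin n) (Fin n) ℂ)
    (hfA : fA = ∑ i, (f (lam i) : ℂ) • vecMulVec (u i) (star (u i)))
    (hfB : fB = ∑ j, (f (mu j) : ℂ) • vecMulVec (v j) (star (v j)))
    (N : Matrix (Fin n) (Fin n) ℂ → ℝ)
    (hN_nonneg : ∀ Y, 0 ≤ N Y)
    (hN_add : ∀ Y Z, N (Y + Z) ≤ N Y + N Z)
    (hN_smul : ∀ (c : ℂ) Y, N (c • Y) = ‖c‖ * N Y)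
    (hN_unitary : ∀ U ∈ Matrix.unitaryGroup (Fin n) ℂ, ∀ Y,
      N (U * Y) = N Y ∧ N (Y * U) = N Y) :
    N (D * fA - fB * D) ≤ (n : ℝ) ^ 2 * Ω₀ * N (D * A - B * D) := by
  classical
  have hN0 : N 0 = 0 := by
    have := hN_smul 0 0
    simpa using this
  rcases Nat.eq_zero_or_pos n with hn | hn
  · subst hn
    simp only [hfA, hfB, Finset.univ_eq_empty, Finset.sum_empty, mul_zero, zero_mul,
      sub_zero]
    simp [hN0]
  have hΩ₀ : 0 ≤ Ω₀ := le_trans (abs_nonneg _) (hbound ⟨0, hn⟩ ⟨0, hn⟩)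
  set P : Fin n → Matrix (Fin n) (Fin n) ℂ := fun i => vecMulVec (u i) (star (u i)) with hP
  set Q : Fin n → Matrix (Fin n) (Fin n) ℂ := fun j => vecMulVec (v j) (star (v j)) with hQ
  -- completeness
  have hcomplete : ∀ (w : Fin n → Fin n → ℂ),
      (∀ i j, star (w i) ⬝ᵥ w j = if i = j then 1 else 0) →
      ∑ i, vecMulVec (w i) (star (w i)) = (1 : Matrix (Fin n) (Fin n) ℂ) := by
    intro w hw
    set R : Matrix (Fin n) (Fin n) ℂ := Matrix.of (fun i k => w i k) with hR
    have hRR : R * Rᴴ = 1 := by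
      ext i j
      have h := hw j i
      simp only [dotProduct, Pi.star_apply] at h
      simp only [mul_apply, conjTranspose_apply, hR, Matrix.of_apply, Matrix.one_apply]
      rw [show ∑ k, w i k * star (w j k) = ∑ k, star (w j k) * w i k from
        Finset.sum_congr rfl fun k _ => mul_comm _ _, h]
      simp [eq_comm]
    have hRR2 : Rᴴ * R = 1 := mul_eq_one_comm.mp hRR
    ext k l
    have h : (Rᴴ * R) l k = (1 : Matrix (Fin n) (Fin n) ℂ) l k := by rw [hRR2]
    simp only [mul_apply, conjTranspose_apply, hR, Matrix.of_apply, Matrix.one_apply] at h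
    simp only [Matrix.sum_apply, vecMulVec_apply, Pi.star_apply, Matrix.one_apply]
    rw [show ∑ i, w i k * star (w i l) = ∑ i, star (w i l) * w i k from
      Finset.sum_congr rfl fun i _ => mul_comm _ _, h]
    simp [eq_comm]
  have hP1 : ∑ i, P i = (1 : Matrix (Fin n) (Fin n) ℂ) := hcomplete u hu
  have hQ1 : ∑ j, Q j = (1 : Matrix (Fin n) (Fin n) ℂ) := hcomplete v hv
  -- projection properties
  have hproj : ∀ (w : Fin n → Fin n → ℂ),
      (∀ i j, star (w i) ⬝ᵥ w j = if i = j then 1 else 0) → ∀ j,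
      vecMulVec (w j) (star (w j)) * vecMulVec (w j) (star (w j))
        = vecMulVec (w j) (star (w j)) := by
    intro w hw j
    rw [vmv_mul_vmv, hw j j]
    simp
  have hherm : ∀ (a : Fin n → ℂ), (vecMulVec a (star a))ᴴ = vecMulVec a (star a) := by
    intro a
    ext k l
    simp only [conjTranspose_apply, vecMulVec_apply, Pi.star_apply]
    rw [star_mul', star_star, mul_comm]
  -- N is contracted by one-sided multiplication with an orthogonal projection
  have hNproj : ∀ (M : Matrix (Fin n) (Fin n) ℂ), Mᴴ = M → M * M = M →
      ∀ X, N (M * X) ≤ N X ∧ N (X * M) ≤ N X := by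
    intro M hMH hMM X
    set U : Matrix (Fin n) (Fin n) ℂ := (2 : ℂ) • M - 1 with hU
    have hUmem : U ∈ Matrix.unitaryGroup (Fin n) ℂ := by
      rw [Matrix.mem_unitaryGroup_iff']
      have hstar : star U = U := by
        simp only [hU, star_sub, star_smul, star_one, Matrix.star_eq_conjTranspose, hMH]
        norm_num
      rw [hstar]
      simp only [hU, sub_mul, mul_sub, smul_mul_assoc, Matrix.mul_smul, one_mul, mul_one,
        hMM, smul_smul, smul_sub]
      rw [show ((2 : ℂ) * 2) • M - (2:ℂ) • M - ((2:ℂ) • M - 1) = ((2:ℂ)*2 - 2 - 2) • M + 1 by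
        rw [sub_smul, sub_smul]; abel]
      norm_num
    constructor
    · have key : M * X = (2⁻¹ : ℂ) • (U * X + X) := by
        simp only [hU, sub_mul, smul_mul_assoc, one_mul]
        rw [sub_add_cancel, smul_smul]
        norm_num
      rw [key, hN_smul]
      have h1 := (hN_unitary U hUmem X).1
      have h2 := hN_add (U * X) X
      have h3 : ‖(2⁻¹ : ℂ)‖ = 2⁻¹ := by norm_num [norm_inv]
      rw [h3]
      nlinarith [hN_nonneg X]
    · have key : X * M = (2⁻¹ : ℂ) • (X * U + X) := by
        simp only [hU, mul_sub, Matrix.mul_smul, mul_one]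
        rw [sub_add_cancel, smul_smul]
        norm_num
      rw [key, hN_smul]
      have h1 := (hN_unitary U hUmem X).2
      have h2 := hN_add (X * U) X
      have h3 : ‖(2⁻¹ : ℂ)‖ = 2⁻¹ := by norm_num [norm_inv]
      rw [h3]
      nlinarith [hN_nonneg X]
  -- eigen relations
  have hmulP : ∀ (c : Fin n → ℝ) (M : Matrix (Fin n) (Fin n) ℂ)
      (hM : M = ∑ k, (c k : ℂ) • vecMulVec (u k) (star (u k))) (i : Fin n),
      M * P i = (c i : ℂ) • P i := by
    intro c M hM i
    rw [hM, Finset.sum_mul]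
    have hterm : ∀ k, ((c k : ℂ) • vecMulVec (u k) (star (u k))) * P i
        = if k = i then (c i : ℂ) • P i else 0 := by
      intro k
      rw [smul_mul_assoc, hP]
      simp only
      rw [vmv_mul_vmv, hu k i]
      split
      · rename_i h; subst h; simp
      · simp
    simp only [hterm]
    simp
  have hQmul : ∀ (c : Fin n → ℝ) (M : Matrix (Fin n) (Fin n) ℂ)
      (hM : M = ∑ k, (c k : ℂ) • vecMulVec (v k) (star (v k))) (j : Fin n),
      Q j * M = (c j : ℂ) • Q j := by
    intro c M hM j
    rw [hM, Finset.mul_sum]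
    have hterm : ∀ k, Q j * ((c k : ℂ) • vecMulVec (v k) (star (v k)))
        = if k = j then (c j : ℂ) • Q j else 0 := by
      intro k
      rw [mul_smul_comm, hQ]
      simp only
      rw [vmv_mul_vmv, hv j k]
      split
      · rename_i h; subst h; simp
      · rename_i h; rw [if_neg (Ne.symm h)]; simp
    simp only [hterm]
    simp
  have hAP : ∀ i, A * P i = (lam i : ℂ) • P i := hmulP lam A hAdec
  have hfAP : ∀ i, fA * P i = ((f (lam i)) : ℂ) • P i := hmulP (fun i => f (lam i)) fA hfA
  have hQB : ∀ j, Q j * B = (mu j : ℂ) • Q j := hQmul mu B hBdec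
  have hQfB : ∀ j, Q j * fB = ((f (mu j)) : ℂ) • Q j := hQmul (fun j => f (mu j)) fB hfB
  -- termwise identities
  have hterm : ∀ i j, Q j * (D * A - B * D) * P i
      = ((lam i : ℂ) - (mu j : ℂ)) • (Q j * D * P i) := by
    intro i j
    have h1 : Q j * (D * A) * P i = (lam i : ℂ) • (Q j * D * P i) := by
      rw [← mul_assoc, mul_assoc (Q j * D) A (P i), hAP i, Matrix.mul_smul]
    have h2 : Q j * (B * D) * P i = (mu j : ℂ) • (Q j * D * P i) := by
      rw [← mul_assoc, hQB j, Matrix.smul_mul, Matrix.smul_mul]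
    rw [mul_sub, sub_mul, h1, h2, sub_smul]
  have hfterm : ∀ i j, Q j * (D * fA - fB * D) * P i
      = (((f (lam i)) : ℂ) - ((f (mu j)) : ℂ)) • (Q j * D * P i) := by
    intro i j
    have h1 : Q j * (D * fA) * P i = ((f (lam i)) : ℂ) • (Q j * D * P i) := by
      rw [← mul_assoc, mul_assoc (Q j * D) fA (P i), hfAP i, Matrix.mul_smul]
    have h2 : Q j * (fB * D) * P i = ((f (mu j)) : ℂ) • (Q j * D * P i) := by
      rw [← mul_assoc, hQfB j, Matrix.smul_mul, Matrix.smul_mul]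
    rw [mul_sub, sub_mul, h1, h2, sub_smul]
  -- decomposition
  have hdecomp : D * fA - fB * D
      = ∑ j, ∑ i, Q j * (D * fA - fB * D) * P i := by
    symm
    have step1 : ∀ j, ∑ i, Q j * (D * fA - fB * D) * P i = Q j * (D * fA - fB * D) := by
      intro j; rw [← Finset.mul_sum, hP1, mul_one]
    simp only [step1]
    rw [← Finset.sum_mul, hQ1, one_mul]
  have key : D * fA - fB * D
      = ∑ j, ∑ i, ((f1 (lam i) (mu j) : ℂ)) • (Q j * (D * A - B * D) * P i) := by
    rw [hdecomp]
    refine Finset.sum_congr rfl fun j _ => Finset.sum_congr rfl fun i _ => ?_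
    rw [hfterm, hterm, smul_smul]
    congr 1
    by_cases h : lam i = mu j
    · rw [h]; simp
    · have hxy : (lam i : ℂ) - (mu j : ℂ) ≠ 0 := by
        rw [sub_ne_zero]
        exact_mod_cast h
      rw [hf1, if_neg h]
      push_cast
      field_simp
  -- put everything together
  rw [key]
  calc N (∑ j, ∑ i, ((f1 (lam i) (mu j) : ℂ)) • (Q j * (D * A - B * D) * P i))
      ≤ ∑ j, N (∑ i, ((f1 (lam i) (mu j) : ℂ)) • (Q j * (D * A - B * D) * P i)) :=
        N_sum_le N hN0 hN_add _ _
    _ ≤ ∑ j, ∑ i, N (((f1 (lam i) (mu j) : ℂ)) • (Q j * (D * A - B * D) * P i)) :=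
        Finset.sum_le_sum fun j _ => N_sum_le N hN0 hN_add _ _
    _ ≤ ∑ j : Fin n, ∑ i : Fin n, Ω₀ * N (D * A - B * D) := by
        refine Finset.sum_le_sum fun j _ => Finset.sum_le_sum fun i _ => ?_
        rw [hN_smul, Complex.norm_real, Real.norm_eq_abs]
        have hQP : N (Q j * (D * A - B * D) * P i) ≤ N (D * A - B * D) := by
          have hqp1 : N (Q j * (D * A - B * D) * P i)
              ≤ N (Q j * (D * A - B * D)) :=
            (hNproj (P i) (hherm (u i)) (hproj u hu i) (Q j * (D * A - B * D))).2
          have hqp2 : N (Q j * (D * A - B * D)) ≤ N (D * A - B * D) :=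
            (hNproj (Q j) (hherm (v j)) (hproj v hv j) (D * A - B * D)).1
          exact hqp1.trans hqp2
        exact mul_le_mul (hbound i j) hQP (hN_nonneg _) hΩ₀
    _ = (n : ℝ) ^ 2 * Ω₀ * N (D * A - B * D) := by
        simp [Finset.sum_const, Finset.card_univ]
        ring
/-- Quasi-commutator tail bound
`Pr(‖D f(A) − f(B) D‖ ≥ θ) ≤ (n²Ω/θ)·E‖DA − BD‖`. -/
theorem random_quasi_commutator_tail_bound {n : ℕ} {Ω : Type*} [MeasureSpace Ω]
    [IsProbabilityMeasure (ℙ : Measure Ω)]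
    (u v : Ω → Fin n → Fin n → ℂ) (lam mu : Ω → Fin n → ℝ)
    (hu : ∀ ω i j, star (u ω i) ⬝ᵥ u ω j = if i = j then 1 else 0)
    (hv : ∀ ω i j, star (v ω i) ⬝ᵥ v ω j = if i = j then 1 else 0)
    (A B : Ω → Matrix (Fin n) (Fin n) ℂ) (D : Matrix (Fin n) (Fin n) ℂ)
    (hAH : ∀ ω, (A ω).IsHermitian) (hBH : ∀ ω, (B ω).IsHermitian)
    (hAdec : ∀ ω, A ω = ∑ i, (lam ω i : ℂ) • vecMulVec (u ω i) (star (u ω i)))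
    (hBdec : ∀ ω, B ω = ∑ j, (mu ω j : ℂ) • vecMulVec (v ω j) (star (v ω j)))
    (f : ℝ → ℝ) (hf : Differentiable ℝ f)
    (f1 : ℝ → ℝ → ℝ)
    (hf1 : ∀ x y, f1 x y = if x = y then deriv f x else (f x - f y) / (x - y))
    (Ω₀ : ℝ)
    (hbound : ∀ ω i j, |f1 (lam ω i) (mu ω j)| ≤ Ω₀)
    (fA fB : Ω → Matrix (Fin n) (Fin n) ℂ)
    (hfA : ∀ ω, fA ω = ∑ i, (f (lam ω i) : ℂ) • vecMulVec (u ω i) (star (u ω i)))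
    (hfB : ∀ ω, fB ω = ∑ j, (f (mu ω j) : ℂ) • vecMulVec (v ω j) (star (v ω j)))
    (N : Matrix (Fin n) (Fin n) ℂ → ℝ)
    (hN_nonneg : ∀ Y, 0 ≤ N Y)
    (hN_add : ∀ Y Z, N (Y + Z) ≤ N Y + N Z)
    (hN_smul : ∀ (c : ℂ) Y, N (c • Y) = ‖c‖ * N Y)
    (hN_unitary : ∀ U ∈ Matrix.unitaryGroup (Fin n) ℂ, ∀ Y,
      N (U * Y) = N Y ∧ N (Y * U) = N Y)
    (hmeas : Measurable fun ω => N (D * fA ω - fB ω * D))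
    (hint : Integrable (fun ω => N (D * A ω - B ω * D)) ℙ)
    (θ : ℝ) (hθ : 0 < θ) :
    (ℙ {ω | θ ≤ N (D * fA ω - fB ω * D)}).toReal
      ≤ ((n : ℝ) ^ 2 * Ω₀ / θ) * ∫ ω, N (D * A ω - B ω * D) ∂ℙ := by
  have hptw : ∀ ω, N (D * fA ω - fB ω * D)
      ≤ (n : ℝ) ^ 2 * Ω₀ * N (D * A ω - B ω * D) := fun ω =>
    pointwise_qc_bound (u ω) (v ω) (lam ω) (mu ω) (hu ω) (hv ω) (A ω) (B ω) D
      (hAdec ω) (hBdec ω) f f1 hf1 Ω₀ (hbound ω) (fA ω) (fB ω) (hfA ω) (hfB ω)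
      N hN_nonneg hN_add hN_smul hN_unitary
  have hgint : Integrable (fun ω => N (D * fA ω - fB ω * D)) ℙ := by
    refine Integrable.mono' (hint.const_mul ((n : ℝ) ^ 2 * Ω₀))
      hmeas.aestronglyMeasurable (ae_of_all _ fun ω => ?_)
    rw [Real.norm_eq_abs, abs_of_nonneg (hN_nonneg _)]
    exact hptw ω
  have markov := mul_meas_ge_le_integral_of_nonneg
    (ae_of_all _ fun ω => hN_nonneg (D * fA ω - fB ω * D)) hgint θ
  have h2 : ∫ ω, N (D * fA ω - fB ω * D) ∂ℙ
      ≤ (n : ℝ) ^ 2 * Ω₀ * ∫ ω, N (D * A ω - B ω * D) ∂ℙ := by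
    calc ∫ ω, N (D * fA ω - fB ω * D) ∂ℙ
        ≤ ∫ ω, (n : ℝ) ^ 2 * Ω₀ * N (D * A ω - B ω * D) ∂ℙ :=
          integral_mono hgint (hint.const_mul _) hptw
      _ = (n : ℝ) ^ 2 * Ω₀ * ∫ ω, N (D * A ω - B ω * D) ∂ℙ :=
          integral_const_mul _ _
  rw [div_mul_eq_mul_div, le_div_iff₀ hθ]
  rw [measureReal_def] at markov
  nlinarith [markov, h2]
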